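/- Let a, b, c, d > 0 and define G_B : ℝ² → ℝ² by G_B(u) = |u|^{-1} ((a u₁² + b u₂²) u₁, (c u₁² + d u₂²) u₂) for u ≠ 0 and G_B(0) = 0. If max{a+c, b+d} ≤ 2(b + c + 2√(ad)) and 2(b + c - 2√(ad)) ≤ min{a+c, b+d}, then G_B is monotone. -/

import Mathlib

open Classical

/-- `G_B(u) = |u|⁻¹ ((a u₁² + b u₂²) u₁, (c u₁² + d u₂²) u₂)`, with `G_B(0) = 0`. -/
noncomputable def GB2 (a b c d : ℝ) (u : EuclideanSpace ℝ (Fin 2)) :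
    EuclideanSpace ℝ (Fin 2) :=
  if u = 0 then 0 else
    ‖u‖⁻¹ • (WithLp.toLp 2 ![(a * (u 0) ^ 2 + b * (u 1) ^ 2) * u 0,
               (c * (u 0) ^ 2 + d * (u 1) ^ 2) * u 1] : EuclideanSpace ℝ (Fin 2))


lemma keyQF (a b c d : ℝ) (ha : 0 < a) (hb : 0 < b) (hc : 0 < c) (hd : 0 < d)
    (e1 : (2*b + c - a)^2 ≤ 16*(a*d)) (e2 : (b + 2*c - d)^2 ≤ 16*(a*d))
    (x y X Y : ℝ) :
    0 ≤ 2*(((3*a*x^2 + b*y^2)*X + 2*b*x*y*Y)*X + (2*c*x*y*X + (c*x^2+3*d*y^2)*Y)*Y)*(x^2+y^2)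
        - ((a*x^2+b*y^2)*x*X + (c*x^2+d*y^2)*y*Y)*(2*(x*X+y*Y)) := by
  have e3 : (2*b + c - a)*(b + 2*c - d) ≤ 16*(a*d) := by
    nlinarith [sq_nonneg ((2*b + c - a) - (b + 2*c - d))]
  set P : ℝ := 2*a*x^4 + 3*a*x^2*y^2 + b*y^4 with hP
  set Q : ℝ := c*x^4 + 3*d*x^2*y^2 + 2*d*y^4 with hQ
  set W : ℝ := x*y*((2*b + c - a)*x^2 + (b + 2*c - d)*y^2) with hW
  have hform : 2*(((3*a*x^2 + b*y^2)*X + 2*b*x*y*Y)*X + (2*c*x*y*X + (c*x^2+3*d*y^2)*Y)*Y)*(x^2+y^2)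
        - ((a*x^2+b*y^2)*x*X + (c*x^2+d*y^2)*y*Y)*(2*(x*X+y*Y))
      = 2*(P*X^2 + W*(X*Y) + Q*Y^2) := by rw [hP, hQ, hW]; ring
  rw [hform]
  have hdisc : W^2 ≤ 4*(P*Q) := by
    have expand : 4*(P*Q) - W^2
        = 8*(a*c)*x^8 + (8*(a*d)+12*(a*c))*(x^6*y^2)
          + (16*(a*d) - (2*b + c - a)^2)*(x^6*y^2)
          + (20*(a*d)+4*(b*c))*(x^4*y^4)
          + 2*((16*(a*d) - (2*b + c - a)*(b + 2*c - d))*(x^4*y^4))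
          + (8*(a*d)+12*(b*d))*(x^2*y^6)
          + (16*(a*d) - (b + 2*c - d)^2)*(x^2*y^6)
          + 8*(b*d)*y^8 := by rw [hP, hQ, hW]; ring
    have t1 : (0:ℝ) ≤ 8*(a*c)*x^8 := by positivity
    have t2 : (0:ℝ) ≤ (8*(a*d)+12*(a*c))*(x^6*y^2) := by positivity
    have t3 : (0:ℝ) ≤ (16*(a*d) - (2*b + c - a)^2)*(x^6*y^2) :=
      mul_nonneg (by linarith) (by positivity)
    have t4 : (0:ℝ) ≤ (20*(a*d)+4*(b*c))*(x^4*y^4) := by positivity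
    have t5 : (0:ℝ) ≤ (16*(a*d) - (2*b + c - a)*(b + 2*c - d))*(x^4*y^4) :=
      mul_nonneg (by linarith) (by positivity)
    have t6 : (0:ℝ) ≤ (8*(a*d)+12*(b*d))*(x^2*y^6) := by positivity
    have t7 : (0:ℝ) ≤ (16*(a*d) - (b + 2*c - d)^2)*(x^2*y^6) :=
      mul_nonneg (by linarith) (by positivity)
    have t8 : (0:ℝ) ≤ 8*(b*d)*y^8 := by positivity
    linarith
  by_cases hxy : x = 0 ∧ y = 0
  · obtain ⟨hx0, hy0⟩ := hxy
    have h1 : P = 0 := by rw [hP, hx0, hy0]; ring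
    have h2 : W = 0 := by rw [hW, hx0, hy0]; ring
    have h3 : Q = 0 := by rw [hQ, hx0, hy0]; ring
    rw [h1, h2, h3]; ring_nf; simp
  · have hP0 : 0 < P := by
      rw [not_and_or] at hxy
      rcases hxy with hx0 | hy0
      · have h : 0 < x^2 := by positivity
        have k1 : (0:ℝ) < 2*a*x^4 := by positivity
        have k2 : (0:ℝ) ≤ 3*a*x^2*y^2 := by positivity
        have k3 : (0:ℝ) ≤ b*y^4 := by positivity
        rw [hP]; linarith
      · have h : 0 < y^2 := by positivity
        have k1 : (0:ℝ) ≤ 2*a*x^4 := by positivity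
        have k2 : (0:ℝ) ≤ 3*a*x^2*y^2 := by positivity
        have k3 : (0:ℝ) < b*y^4 := by positivity
        rw [hP]; linarith
    nlinarith [sq_nonneg (2*P*X + W*Y), mul_nonneg (sub_nonneg.2 hdisc) (sq_nonneg Y), hP0.le]

lemma inner_two (x y : EuclideanSpace ℝ (Fin 2)) :
    (inner ℝ x y : ℝ) = x 0 * y 0 + x 1 * y 1 := by
  simp [PiLp.inner_apply, Fin.sum_univ_two, RCLike.inner_apply]; ring

lemma GB2_apply_ne (a b c d : ℝ) (u : EuclideanSpace ℝ (Fin 2)) (hu : u ≠ 0) (i : Fin 2) :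
    GB2 a b c d u i = ‖u‖⁻¹ * (![(a * (u 0) ^ 2 + b * (u 1) ^ 2) * u 0,
               (c * (u 0) ^ 2 + d * (u 1) ^ 2) * u 1] i) := by
  rw [GB2, if_neg hu]
  simp [PiLp.smul_apply, smul_eq_mul]

lemma eq_zero_of_comps (w : EuclideanSpace ℝ (Fin 2)) (h0 : w 0 = 0) (h1 : w 1 = 0) : w = 0 := by
  ext i; fin_cases i <;> simpa

lemma GB2_smul (a b c d s : ℝ) (w : EuclideanSpace ℝ (Fin 2)) :
    GB2 a b c d (s • w) = (s * |s|) • GB2 a b c d w := by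
  by_cases hw : w = 0
  · simp [hw, GB2]
  by_cases hs : s = 0
  · simp [hs, GB2]
  have hsw : s • w ≠ 0 := smul_ne_zero hs hw
  have hns : ‖s • w‖ = |s| * ‖w‖ := by rw [norm_smul, Real.norm_eq_abs]
  have habs : |s| ≠ 0 := abs_ne_zero.2 hs
  have hnw : ‖w‖ ≠ 0 := norm_ne_zero_iff.2 hw
  ext i
  rw [GB2, if_neg hsw]
  have hcomp : ∀ j : Fin 2, (s • w) j = s * w j := fun j => by
    simp [PiLp.smul_apply, smul_eq_mul]
  have hRi : ((s * |s|) • GB2 a b c d w) i = (s * |s|) * GB2 a b c d w i := by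
    simp [PiLp.smul_apply, smul_eq_mul]
  rw [hRi, GB2_apply_ne a b c d w hw i]
  have hLi : (‖s • w‖⁻¹ • (WithLp.toLp 2 ![(a * ((s • w) 0) ^ 2 + b * ((s • w) 1) ^ 2) * (s • w) 0,
               (c * ((s • w) 0) ^ 2 + d * ((s • w) 1) ^ 2) * (s • w) 1] : EuclideanSpace ℝ (Fin 2))) i
      = ‖s • w‖⁻¹ * (![(a * ((s • w) 0) ^ 2 + b * ((s • w) 1) ^ 2) * (s • w) 0,
               (c * ((s • w) 0) ^ 2 + d * ((s • w) 1) ^ 2) * (s • w) 1] i) := by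
    simp [PiLp.smul_apply, smul_eq_mul]
  rw [hLi, hcomp 0, hcomp 1, hns]
  have hss : s^2 = |s|^2 := (sq_abs s).symm
  fin_cases i
  · simp only [Matrix.cons_val_zero, Matrix.cons_val_one, Matrix.head_cons, Fin.zero_eta, Fin.mk_one]
    field_simp
    linear_combination ((a * (w 0)^2 + b * (w 1)^2) * (w 0)) * hss
  · simp only [Matrix.cons_val_zero, Matrix.cons_val_one, Matrix.head_cons, Fin.zero_eta, Fin.mk_one]
    field_simp
    linear_combination ((c * (w 0)^2 + d * (w 1)^2) * (w 1)) * hss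

lemma GB2_inner_self (a b c d : ℝ) (ha : 0 < a) (hb : 0 < b) (hc : 0 < c) (hd : 0 < d)
    (w : EuclideanSpace ℝ (Fin 2)) : 0 ≤ (inner ℝ (GB2 a b c d w) w : ℝ) := by
  by_cases hw : w = 0
  · simp [hw, GB2]
  have : (inner ℝ (GB2 a b c d w) w : ℝ) = GB2 a b c d w 0 * w 0 + GB2 a b c d w 1 * w 1 := by
    simp [PiLp.inner_apply, Fin.sum_univ_two, RCLike.inner_apply]; ring
  rw [this, GB2_apply_ne a b c d w hw 0, GB2_apply_ne a b c d w hw 1]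
  simp only [Matrix.cons_val_zero, Matrix.cons_val_one, Matrix.head_cons]
  have h1 : (0:ℝ) ≤ ‖w‖⁻¹ := by positivity
  have h2 : (0:ℝ) ≤ (a * (w 0)^2 + b * (w 1)^2) * w 0 * w 0 + (c * (w 0)^2 + d * (w 1)^2) * w 1 * w 1 := by
    nlinarith [sq_nonneg (w 0), sq_nonneg (w 1), sq_nonneg (w 0 * w 1), sq_nonneg ((w 0)*(w 0)), sq_nonneg ((w 1)*(w 1))]
  nlinarith [mul_nonneg h1 h2]

lemma segment_mono (a b c d : ℝ) (ha : 0 < a) (hb : 0 < b) (hc : 0 < c) (hd : 0 < d)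
    (e1 : (2*b + c - a)^2 ≤ 16*(a*d)) (e2 : (b + 2*c - d)^2 ≤ 16*(a*d))
    (v0 v1 X Y : ℝ)
    (hpos : ∀ t : ℝ, 0 < (v0 + t*X)^2 + (v1 + t*Y)^2) :
    Monotone (fun t : ℝ =>
      ((a*(v0+t*X)^2 + b*(v1+t*Y)^2)*(v0+t*X)*X + (c*(v0+t*X)^2 + d*(v1+t*Y)^2)*(v1+t*Y)*Y)
        / Real.sqrt ((v0+t*X)^2 + (v1+t*Y)^2)) := by
  have hx : ∀ t : ℝ, HasDerivAt (fun t : ℝ => v0 + t*X) X t := by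
    intro t; simpa using (hasDerivAt_mul_const X).const_add v0
  have hy : ∀ t : ℝ, HasDerivAt (fun t : ℝ => v1 + t*Y) Y t := by
    intro t; simpa using (hasDerivAt_mul_const Y).const_add v1
  have hn : ∀ t : ℝ, HasDerivAt
      (fun t : ℝ => (a*(v0+t*X)^2 + b*(v1+t*Y)^2)*(v0+t*X)*X + (c*(v0+t*X)^2 + d*(v1+t*Y)^2)*(v1+t*Y)*Y)
      (((3*a*(v0+t*X)^2 + b*(v1+t*Y)^2)*X + 2*b*(v0+t*X)*(v1+t*Y)*Y)*X
        + (2*c*(v0+t*X)*(v1+t*Y)*X + (c*(v0+t*X)^2+3*d*(v1+t*Y)^2)*Y)*Y) t := by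
    intro t
    have h := (((((hx t).pow 2).const_mul a).add (((hy t).pow 2).const_mul b)).mul (hx t)).mul_const X
      |>.add ((((((hx t).pow 2).const_mul c).add (((hy t).pow 2).const_mul d)).mul (hy t)).mul_const Y)
    refine h.congr_deriv ?_
    simp only [Pi.add_apply, Pi.pow_apply]
    ring
  have hq : ∀ t : ℝ, HasDerivAt (fun t : ℝ => (v0+t*X)^2 + (v1+t*Y)^2)
      (2*((v0+t*X)*X + (v1+t*Y)*Y)) t := by
    intro t
    have h := ((hx t).pow 2).add ((hy t).pow 2)
    refine h.congr_deriv ?_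
    ring
  have hr : ∀ t : ℝ, HasDerivAt (fun t : ℝ => Real.sqrt ((v0+t*X)^2 + (v1+t*Y)^2))
      ((2*((v0+t*X)*X + (v1+t*Y)*Y)) / (2 * Real.sqrt ((v0+t*X)^2 + (v1+t*Y)^2))) t := by
    intro t
    exact (hq t).sqrt (ne_of_gt (hpos t))
  have hrpos : ∀ t : ℝ, 0 < Real.sqrt ((v0+t*X)^2 + (v1+t*Y)^2) :=
    fun t => Real.sqrt_pos.2 (hpos t)
  have hf : ∀ t : ℝ, HasDerivAt (fun t : ℝ =>
      ((a*(v0+t*X)^2 + b*(v1+t*Y)^2)*(v0+t*X)*X + (c*(v0+t*X)^2 + d*(v1+t*Y)^2)*(v1+t*Y)*Y)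
        / Real.sqrt ((v0+t*X)^2 + (v1+t*Y)^2))
      (((((3*a*(v0+t*X)^2 + b*(v1+t*Y)^2)*X + 2*b*(v0+t*X)*(v1+t*Y)*Y)*X
        + (2*c*(v0+t*X)*(v1+t*Y)*X + (c*(v0+t*X)^2+3*d*(v1+t*Y)^2)*Y)*Y)
          * Real.sqrt ((v0+t*X)^2 + (v1+t*Y)^2)
        - ((a*(v0+t*X)^2 + b*(v1+t*Y)^2)*(v0+t*X)*X + (c*(v0+t*X)^2 + d*(v1+t*Y)^2)*(v1+t*Y)*Y)
          * ((2*((v0+t*X)*X + (v1+t*Y)*Y)) / (2 * Real.sqrt ((v0+t*X)^2 + (v1+t*Y)^2))))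
        / (Real.sqrt ((v0+t*X)^2 + (v1+t*Y)^2))^2) t := by
    intro t
    exact (hn t).div (hr t) (ne_of_gt (hrpos t))
  apply monotone_of_deriv_nonneg
  · exact fun t => (hf t).differentiableAt
  · intro t
    rw [(hf t).deriv]
    set r : ℝ := Real.sqrt ((v0+t*X)^2 + (v1+t*Y)^2) with hrdef
    have hrne : r ≠ 0 := ne_of_gt (hrpos t)
    have hr2 : r^2 = (v0+t*X)^2 + (v1+t*Y)^2 := Real.sq_sqrt (hpos t).le
    have heq : (((3*a*(v0+t*X)^2 + b*(v1+t*Y)^2)*X + 2*b*(v0+t*X)*(v1+t*Y)*Y)*X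
        + (2*c*(v0+t*X)*(v1+t*Y)*X + (c*(v0+t*X)^2+3*d*(v1+t*Y)^2)*Y)*Y) * r
        - ((a*(v0+t*X)^2 + b*(v1+t*Y)^2)*(v0+t*X)*X + (c*(v0+t*X)^2 + d*(v1+t*Y)^2)*(v1+t*Y)*Y)
          * ((2*((v0+t*X)*X + (v1+t*Y)*Y)) / (2 * r))
        = (2*(((3*a*(v0+t*X)^2 + b*(v1+t*Y)^2)*X + 2*b*(v0+t*X)*(v1+t*Y)*Y)*X
            + (2*c*(v0+t*X)*(v1+t*Y)*X + (c*(v0+t*X)^2+3*d*(v1+t*Y)^2)*Y)*Y)*((v0+t*X)^2+(v1+t*Y)^2)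
          - ((a*(v0+t*X)^2 + b*(v1+t*Y)^2)*(v0+t*X)*X + (c*(v0+t*X)^2 + d*(v1+t*Y)^2)*(v1+t*Y)*Y)
            *(2*((v0+t*X)*X+(v1+t*Y)*Y)))
          / (2 * r) := by
      rw [eq_div_iff (by positivity : (2:ℝ)*r ≠ 0)]
      field_simp
      linear_combination ((((3*a*(v0+t*X)^2 + b*(v1+t*Y)^2)*X + 2*b*(v0+t*X)*(v1+t*Y)*Y)*X
            + (2*c*(v0+t*X)*(v1+t*Y)*X + (c*(v0+t*X)^2+3*d*(v1+t*Y)^2)*Y)*Y)) * hr2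
    rw [heq]
    exact div_nonneg (div_nonneg
      (keyQF a b c d ha hb hc hd e1 e2 (v0+t*X) (v1+t*Y) X Y) (by positivity)) (sq_nonneg _)

lemma mul_abs_mono {s r : ℝ} (h : s ≤ r) : s * |s| ≤ r * |r| := by
  rcases abs_cases s with ⟨hs, hs'⟩ | ⟨hs, hs'⟩ <;>
    rcases abs_cases r with ⟨hr, hr'⟩ | ⟨hr, hr'⟩ <;> nlinarith

theorem GB2_monotone_of_maxmin_condition (a b c d : ℝ)
    (ha : 0 < a) (hb : 0 < b) (hc : 0 < c) (hd : 0 < d)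
    (h1 : max (a + c) (b + d) ≤ 2 * (b + c + 2 * Real.sqrt (a * d)))
    (h2 : 2 * (b + c - 2 * Real.sqrt (a * d)) ≤ min (a + c) (b + d)) :
    ∀ u v : EuclideanSpace ℝ (Fin 2),
      0 ≤ @inner ℝ _ _ (GB2 a b c d u - GB2 a b c d v) (u - v) := by
  have hσ : Real.sqrt (a*d) ^ 2 = a*d := Real.sq_sqrt (by positivity)
  have c1 : a + c ≤ 2*(b+c+2*Real.sqrt (a*d)) := le_trans (le_max_left _ _) h1
  have c2 : b + d ≤ 2*(b+c+2*Real.sqrt (a*d)) := le_trans (le_max_right _ _) h1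
  have c3 : 2*(b+c-2*Real.sqrt (a*d)) ≤ a + c := le_trans h2 (min_le_left _ _)
  have c4 : 2*(b+c-2*Real.sqrt (a*d)) ≤ b + d := le_trans h2 (min_le_right _ _)
  have e1 : (2*b + c - a)^2 ≤ 16*(a*d) := by
    have h := sq_le_sq' (by linarith : -(4*Real.sqrt (a*d)) ≤ 2*b + c - a)
      (by linarith : 2*b + c - a ≤ 4*Real.sqrt (a*d))
    calc (2*b + c - a)^2 ≤ (4*Real.sqrt (a*d))^2 := h
      _ = 16*(a*d) := by rw [mul_pow, hσ]; ring
  have e2 : (b + 2*c - d)^2 ≤ 16*(a*d) := by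
    have h := sq_le_sq' (by linarith : -(4*Real.sqrt (a*d)) ≤ b + 2*c - d)
      (by linarith : b + 2*c - d ≤ 4*Real.sqrt (a*d))
    calc (b + 2*c - d)^2 ≤ (4*Real.sqrt (a*d))^2 := h
      _ = 16*(a*d) := by rw [mul_pow, hσ]; ring
  intro u v
  by_cases huv : u = v
  · simp [huv]
  by_cases hline : ∃ t : ℝ, v + t • (u - v) = 0
  · obtain ⟨t₀, ht₀⟩ := hline
    set w : EuclideanSpace ℝ (Fin 2) := u - v with hw
    have hv : v = (-t₀) • w := by
      rw [neg_smul]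
      exact eq_neg_of_add_eq_zero_left ht₀
    have hu : u = (1 - t₀) • w := by
      have huw : u = w + v := by rw [hw]; abel
      rw [huw, hv, sub_smul, one_smul, neg_smul]
      abel
    have hGu : GB2 a b c d u = ((1 - t₀) * |1 - t₀|) • GB2 a b c d w := by
      conv_lhs => rw [hu]
      rw [GB2_smul]
    have hGv : GB2 a b c d v = ((-t₀) * |(-t₀)|) • GB2 a b c d w := by
      conv_lhs => rw [hv]
      rw [GB2_smul]
    rw [hGu, hGv, inner_sub_left, real_inner_smul_left, real_inner_smul_left]
    have hI := GB2_inner_self a b c d ha hb hc hd w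
    have hm : (-t₀)*|(-t₀)| ≤ (1 - t₀)*|1 - t₀| := mul_abs_mono (by linarith)
    nlinarith [mul_nonneg (sub_nonneg.2 hm) hI]
  · push_neg at hline
    have hcomp : ∀ t : ℝ, ((v + t • (u - v)) : EuclideanSpace ℝ (Fin 2)) 0
          = v 0 + t * (u 0 - v 0) ∧ ((v + t • (u - v)) : EuclideanSpace ℝ (Fin 2)) 1
          = v 1 + t * (u 1 - v 1) := by
      intro t
      constructor <;> simp [PiLp.add_apply, PiLp.smul_apply, PiLp.sub_apply, smul_eq_mul]
    have hpos : ∀ t : ℝ, 0 < (v 0 + t*(u 0 - v 0))^2 + (v 1 + t*(u 1 - v 1))^2 := by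
      intro t
      rcases lt_or_eq_of_le (by positivity : (0:ℝ) ≤ (v 0 + t*(u 0 - v 0))^2 + (v 1 + t*(u 1 - v 1))^2) with h | h
      · exact h
      · exfalso
        apply hline t
        apply eq_zero_of_comps
        · rw [(hcomp t).1]; nlinarith [sq_nonneg (v 0 + t*(u 0 - v 0)), sq_nonneg (v 1 + t*(u 1 - v 1))]
        · rw [(hcomp t).2]; nlinarith [sq_nonneg (v 0 + t*(u 0 - v 0)), sq_nonneg (v 1 + t*(u 1 - v 1))]
    have hnorm : ∀ t : ℝ, ‖(v + t • (u - v) : EuclideanSpace ℝ (Fin 2))‖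
        = Real.sqrt ((v 0 + t*(u 0 - v 0))^2 + (v 1 + t*(u 1 - v 1))^2) := by
      intro t
      rw [EuclideanSpace.norm_eq]
      congr 1
      rw [Fin.sum_univ_two, Real.norm_eq_abs, Real.norm_eq_abs, sq_abs, sq_abs,
        (hcomp t).1, (hcomp t).2]
    have hsub : ((u - v : EuclideanSpace ℝ (Fin 2)) 0 = u 0 - v 0)
        ∧ ((u - v : EuclideanSpace ℝ (Fin 2)) 1 = u 1 - v 1) := by
      constructor <;> simp [PiLp.sub_apply]
    have hrep : ∀ t : ℝ, (inner ℝ (GB2 a b c d (v + t • (u - v))) (u - v) : ℝ)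
        = ((a*(v 0 + t*(u 0 - v 0))^2 + b*(v 1 + t*(u 1 - v 1))^2)*(v 0 + t*(u 0 - v 0))*(u 0 - v 0)
          + (c*(v 0 + t*(u 0 - v 0))^2 + d*(v 1 + t*(u 1 - v 1))^2)*(v 1 + t*(u 1 - v 1))*(u 1 - v 1))
          / Real.sqrt ((v 0 + t*(u 0 - v 0))^2 + (v 1 + t*(u 1 - v 1))^2) := by
      intro t
      rw [inner_two, GB2_apply_ne a b c d _ (hline t) 0, GB2_apply_ne a b c d _ (hline t) 1]
      simp only [Matrix.cons_val_zero, Matrix.cons_val_one, Matrix.head_cons]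
      rw [hnorm t, (hcomp t).1, (hcomp t).2, hsub.1, hsub.2]
      ring
    have hmono := segment_mono a b c d ha hb hc hd e1 e2 (v 0) (v 1) (u 0 - v 0) (u 1 - v 1) hpos
    have hm01 := hmono (zero_le_one)
    simp only at hm01
    have hval1 : (inner ℝ (GB2 a b c d u) (u - v) : ℝ)
        = ((a*(v 0 + 1*(u 0 - v 0))^2 + b*(v 1 + 1*(u 1 - v 1))^2)*(v 0 + 1*(u 0 - v 0))*(u 0 - v 0)
          + (c*(v 0 + 1*(u 0 - v 0))^2 + d*(v 1 + 1*(u 1 - v 1))^2)*(v 1 + 1*(u 1 - v 1))*(u 1 - v 1))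
          / Real.sqrt ((v 0 + 1*(u 0 - v 0))^2 + (v 1 + 1*(u 1 - v 1))^2) := by
      have h := hrep 1
      have hone : v + (1:ℝ) • (u - v) = u := by simp
      rw [hone] at h
      exact h
    have hval0 : (inner ℝ (GB2 a b c d v) (u - v) : ℝ)
        = ((a*(v 0 + 0*(u 0 - v 0))^2 + b*(v 1 + 0*(u 1 - v 1))^2)*(v 0 + 0*(u 0 - v 0))*(u 0 - v 0)
          + (c*(v 0 + 0*(u 0 - v 0))^2 + d*(v 1 + 0*(u 1 - v 1))^2)*(v 1 + 0*(u 1 - v 1))*(u 1 - v 1))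
          / Real.sqrt ((v 0 + 0*(u 0 - v 0))^2 + (v 1 + 0*(u 1 - v 1))^2) := by
      have h := hrep 0
      have hzero : v + (0:ℝ) • (u - v) = v := by simp
      rw [hzero] at h
      exact h
    rw [inner_sub_left, hval1, hval0]
    linarith [hm01]
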